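/- For n ≥ 2 and subspaces A, B, C₁, ..., Cₙ of a finite-dimensional vector space V, (n-1)·I(A;B) + dim(C₁+⋯+Cₙ) ≤ Σ_{i=1}^{n} I(A+C_i; B+C_i), where I(X;Y) = dim X + dim Y - dim(X+Y). -/
import Mathlib


open Module

noncomputable def condH {F V : Type*} [Field F] [AddCommGroup V] [Module F V]
    (X Y : Submodule F V) : ℤ :=
  (finrank F ↑(X ⊔ Y) : ℤ) - finrank F ↑Y

noncomputable def mutI {F V : Type*} [Field F] [AddCommGroup V] [Module F V]
    (X Y : Submodule F V) : ℤ :=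
  (finrank F ↑X : ℤ) + finrank F ↑Y - finrank F ↑(X ⊔ Y)

noncomputable def condI {F V : Type*} [Field F] [AddCommGroup V] [Module F V]
    (X Y T : Submodule F V) : ℤ :=
  (finrank F ↑(X ⊔ T) : ℤ) + finrank F ↑(Y ⊔ T) - finrank F ↑(X ⊔ Y ⊔ T) - finrank F ↑T

lemma mutI_eq_inf {F V : Type*} [Field F] [AddCommGroup V] [Module F V] [FiniteDimensional F V]
    (X Y : Submodule F V) : mutI X Y = (finrank F ↑(X ⊓ Y) : ℤ) := by
  have := Submodule.finrank_sup_add_finrank_inf_eq X Y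
  unfold mutI
  omega

lemma key {F V : Type*} [Field F] [AddCommGroup V] [Module F V] [FiniteDimensional F V]
    (W : Submodule F V) (C : ℕ → Submodule F V) (s : Finset ℕ) (hs : s.Nonempty) :
    ((s.card : ℤ) - 1) * finrank F W + (finrank F ↑(W ⊔ s.sup C) : ℤ) ≤
      ∑ i ∈ s, (finrank F ↑(W ⊔ C i) : ℤ) := by
  induction hs using Finset.Nonempty.cons_induction with
  | singleton a => rw [Finset.sup_singleton]; simp
  | cons a s ha hs ih =>
    rw [Finset.sum_cons, Finset.card_cons, Finset.sup_cons]
    have h1 : (finrank F ↑((W ⊔ C a) ⊔ (W ⊔ s.sup C)) : ℤ) + finrank F ↑((W ⊔ C a) ⊓ (W ⊔ s.sup C))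
        = finrank F ↑(W ⊔ C a) + finrank F ↑(W ⊔ s.sup C) := by
      exact_mod_cast Submodule.finrank_sup_add_finrank_inf_eq _ _
    have h2 : (W ⊔ C a) ⊔ (W ⊔ s.sup C) = W ⊔ (C a ⊔ s.sup C) := by
      rw [sup_sup_sup_comm, sup_idem]
    have h3 : (finrank F W : ℤ) ≤ finrank F ↑((W ⊔ C a) ⊓ (W ⊔ s.sup C)) := by
      exact_mod_cast Submodule.finrank_mono (le_inf le_sup_left le_sup_left)
    rw [h2] at h1
    push_cast
    linarith

theorem stmt14 {F V : Type*} [Field F] [AddCommGroup V] [Module F V] [FiniteDimensional F V]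
    (n : ℕ) (hn : 2 ≤ n) (A B : Submodule F V) (C : ℕ → Submodule F V) :
    ((n : ℤ) - 1) * mutI A B + (finrank F ↑((Finset.Icc 1 n).sup C) : ℤ) ≤
      ∑ i ∈ Finset.Icc 1 n, mutI (A ⊔ C i) (B ⊔ C i) := by
  set s := Finset.Icc 1 n with hs
  have hcard : s.card = n := by simp [hs]
  have hne : s.Nonempty := by
    rw [hs]
    exact ⟨1, by simp; omega⟩
  have hk := key (A ⊓ B) C s hne
  have hmono : (finrank F ↑((A ⊓ B) ⊔ s.sup C) : ℤ) ≥ finrank F ↑(s.sup C) :=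
    Int.ofNat_le.mpr (Submodule.finrank_mono le_sup_right)
  have hsum : ∑ i ∈ s, (finrank F ↑((A ⊓ B) ⊔ C i) : ℤ) ≤
      ∑ i ∈ s, mutI (A ⊔ C i) (B ⊔ C i) := by
    apply Finset.sum_le_sum
    intro i _
    rw [mutI_eq_inf]
    have : (A ⊓ B) ⊔ C i ≤ (A ⊔ C i) ⊓ (B ⊔ C i) :=
      le_inf (sup_le_sup_right inf_le_left _) (sup_le_sup_right inf_le_right _)
    exact_mod_cast Submodule.finrank_mono this
  rw [mutI_eq_inf, ← hcard]
  linarith
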